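/- Let H₁, H₂ be commutative multiplicative hyperrings and P₁ a nonzero proper strong C-hyperideal of H₁. Then P₁ is an sdf-absorbing hyperideal of H₁ if and only if P₁ × H₂ is an sdf-absorbing hyperideal of H₁ × H₂. -/

import Mathlib

open Pointwise

/-- A commutative multiplicative hyperring structure on an abelian group `H`. -/
structure MulHyperring (H : Type*) [AddCommGroup H] where
  hmul : H → H → Set H
  hmul_nonempty : ∀ x y : H, (hmul x y).Nonempty
  hmul_comm : ∀ x y : H, hmul x y = hmul y x
  hmul_assoc : ∀ x y z : H, (⋃ a ∈ hmul y z, hmul x a) = ⋃ b ∈ hmul x y, hmul b z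
  hmul_distrib : ∀ x y z : H, hmul x (y + z) ⊆ hmul x y + hmul x z
  hmul_neg : ∀ x y : H, hmul x (-y) = -(hmul x y)

namespace Hyper

variable {H : Type*} [AddCommGroup H] (mul : H → H → Set H)

/-- `P` is a hyperideal. -/
def IsIdeal (P : Set H) : Prop :=
  (0 : H) ∈ P ∧ (∀ x ∈ P, ∀ y ∈ P, x - y ∈ P) ∧ ∀ r : H, ∀ x ∈ P, mul r x ⊆ P

/-- Hyperproduct `a ∘ b₁ ∘ ⋯ ∘ bₙ`. -/
def hprod : H → List H → Set H
  | a, [] => {a}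
  | a, b :: l => ⋃ t ∈ mul a b, hprod t l

/-- `C` is a finite hyperproduct `c₁ ∘ ⋯ ∘ cₙ`. -/
def IsProduct (C : Set H) : Prop := ∃ (a : H) (l : List H), C = hprod mul a l

/-- `D` is a finite (nonempty) sum of finite hyperproducts. -/
def IsSum (D : Set H) : Prop :=
  ∃ L : List (Set H), L ≠ [] ∧ (∀ C ∈ L, IsProduct mul C) ∧ D = L.sum

/-- `P` is a `𝒞`-hyperideal. -/
def IsCIdeal (P : Set H) : Prop :=
  IsIdeal mul P ∧ ∀ C : Set H, IsProduct mul C → (C ∩ P).Nonempty → C ⊆ P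

/-- `P` is a strong `𝒞`-hyperideal. -/
def IsStrongCIdeal (P : Set H) : Prop :=
  IsIdeal mul P ∧ ∀ D : Set H, IsSum mul D → (D ∩ P).Nonempty → D ⊆ P

/-- The hypersquare `x² = x ∘ x`. -/
def sq (x : H) : Set H := mul x x

/-- `P` is an sdf-absorbing hyperideal. -/
def IsSdf (P : Set H) : Prop :=
  IsIdeal mul P ∧ P ≠ Set.univ ∧
    ∀ x y : H, x ≠ 0 → y ≠ 0 → sq mul x - sq mul y ⊆ P → x - y ∈ P ∨ x + y ∈ P

/-- `P` is a weakly sdf-absorbing hyperideal. -/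
def IsWeaklySdf (P : Set H) : Prop :=
  IsIdeal mul P ∧ P ≠ Set.univ ∧
    ∀ x y : H, x ≠ 0 → y ≠ 0 → (0 : H) ∉ sq mul x - sq mul y →
      sq mul x - sq mul y ⊆ P → x - y ∈ P ∨ x + y ∈ P

/-- `P` is a prime hyperideal. -/
def IsPrime (P : Set H) : Prop :=
  IsIdeal mul P ∧ P ≠ Set.univ ∧ ∀ x y : H, mul x y ⊆ P → x ∈ P ∨ y ∈ P

/-- The radical: intersection of the prime hyperideals containing `P`. -/
def rad (P : Set H) : Set H := ⋂₀ {Q : Set H | IsPrime mul Q ∧ P ⊆ Q}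

/-- `hpow mul x n` is the hyperpower `x^(n+1)`. -/
def hpow (x : H) (n : ℕ) : Set H := hprod mul x (List.replicate n x)

/-- `x` is nilpotent: `0 ∈ xⁿ` for some `n`. -/
def IsNilpotent (x : H) : Prop := ∃ n : ℕ, (0 : H) ∈ hpow mul x n

/-- `x` is a regular element: `x ∈ x² ∘ y` for some `y`. -/
def IsRegularElem (x : H) : Prop := ∃ y : H, x ∈ ⋃ t ∈ sq mul x, mul t y

/-- The hyperideal generated by a set `S`. -/
def span (S : Set H) : Set H := ⋂₀ {Q : Set H | IsIdeal mul Q ∧ S ⊆ Q}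

/-- `P` is a maximal hyperideal. -/
def IsMaximal (P : Set H) : Prop :=
  IsIdeal mul P ∧ P ≠ Set.univ ∧
    ∀ B : Set H, IsIdeal mul B → P ⊆ B → B = P ∨ B = Set.univ

end Hyper

/-- Componentwise hypermultiplication on a product. -/
def prodMul {H₁ H₂ : Type*} (m₁ : H₁ → H₁ → Set H₁) (m₂ : H₂ → H₂ → Set H₂) :
    H₁ × H₂ → H₁ × H₂ → Set (H₁ × H₂) :=
  fun a b => (m₁ a.1 b.1) ×ˢ (m₂ a.2 b.2)

section Aux

variable {H : Type*} [AddCommGroup H] {mul : H → H → Set H} {P : Set H}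

lemma ideal_neg (hP : Hyper.IsIdeal mul P) {x : H} (hx : x ∈ P) : -x ∈ P := by
  simpa using hP.2.1 0 hP.1 x hx

lemma ideal_add (hP : Hyper.IsIdeal mul P) {x y : H} (hx : x ∈ P) (hy : y ∈ P) :
    x + y ∈ P := by
  simpa [sub_neg_eq_add] using hP.2.1 x hx (-y) (ideal_neg hP hy)

lemma mem_of_sub_left (hP : Hyper.IsIdeal mul P) {a b : H} (ha : a ∈ P)
    (hab : a - b ∈ P) : b ∈ P := by
  have := hP.2.1 a ha (a - b) hab
  simpa using this

end Aux

/-- `P₁` is sdf-absorbing in `H₁` iff `P₁ × H₂` is sdf-absorbing in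
`H₁ × H₂`. -/
theorem stmt15 {H₁ H₂ : Type*} [AddCommGroup H₁] [AddCommGroup H₂]
    (M₁ : MulHyperring H₁) (M₂ : MulHyperring H₂)
    (P₁ : Set H₁) (h₁ : Hyper.IsStrongCIdeal M₁.hmul P₁)
    (h₁0 : P₁ ≠ ({0} : Set H₁)) (h₁p : P₁ ≠ Set.univ) :
    Hyper.IsSdf M₁.hmul P₁ ↔
      Hyper.IsSdf (prodMul M₁.hmul M₂.hmul) (P₁ ×ˢ (Set.univ : Set H₂)) := by
  obtain ⟨hPid, hstrong⟩ := h₁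
  clear hstrong
  -- nonzero element of P₁
  have hP0 : (0:H₁) ∈ P₁ := hPid.1
  obtain ⟨p, hpP, hp0⟩ : ∃ p ∈ P₁, p ≠ 0 := by
    by_contra h
    push_neg at h
    exact h₁0 (Set.eq_singleton_iff_unique_mem.mpr ⟨hP0, fun x hx => by
      by_contra hne; exact hne (h x hx)⟩)
  have sq0 : Hyper.sq M₁.hmul 0 ⊆ P₁ := hPid.2.2 0 0 hP0
  -- from sq 0 - sq y ⊆ P₁ (or sq x - sq 0 ⊆ P₁), membership follows
  have key : ∀ y : H₁, y ≠ 0 → Hyper.sq M₁.hmul y ⊆ P₁ →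
      Hyper.IsSdf M₁.hmul P₁ → y ∈ P₁ := by
    intro y hy hsq hsdf
    have hsub : Hyper.sq M₁.hmul y - Hyper.sq M₁.hmul p ⊆ P₁ := by
      rintro c ⟨a, ha, b, hb, rfl⟩
      exact hPid.2.1 a (hsq ha) b (hPid.2.2 p p hpP hb)
    rcases hsdf.2.2 y p hy hp0 hsub with h | h
    · have := ideal_add hPid h hpP; simpa using this
    · have := hPid.2.1 (y + p) h p hpP; simpa using this
  constructor
  · rintro hsdf
    refine ⟨⟨⟨hP0, trivial⟩, ?_, ?_⟩, ?_, ?_⟩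
    · rintro x ⟨hx, -⟩ y ⟨hy, -⟩
      exact ⟨hPid.2.1 _ hx _ hy, trivial⟩
    · rintro r x ⟨hx, -⟩ z ⟨hz1, -⟩
      exact ⟨hPid.2.2 r.1 x.1 hx hz1, trivial⟩
    · intro hu
      obtain ⟨a, ha⟩ : ∃ a : H₁, a ∉ P₁ := by
        by_contra h; push_neg at h
        exact h₁p (Set.eq_univ_of_forall h)
      have : (a, (0:H₂)) ∈ P₁ ×ˢ (Set.univ : Set H₂) := hu ▸ trivial
      exact ha this.1
    · rintro x y hx hy hsub
      -- extract first-component inclusion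
      have h1 : Hyper.sq M₁.hmul x.1 - Hyper.sq M₁.hmul y.1 ⊆ P₁ := by
        rintro c ⟨a, ha, b, hb, rfl⟩
        obtain ⟨a2, ha2⟩ := M₂.hmul_nonempty x.2 x.2
        obtain ⟨b2, hb2⟩ := M₂.hmul_nonempty y.2 y.2
        have : ((a, a2) : H₁ × H₂) - (b, b2) ∈
            Hyper.sq (prodMul M₁.hmul M₂.hmul) x - Hyper.sq (prodMul M₁.hmul M₂.hmul) y :=
          ⟨(a, a2), ⟨ha, ha2⟩, (b, b2), ⟨hb, hb2⟩, rfl⟩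
        exact (hsub this).1
      by_cases hx1 : x.1 = 0
      · by_cases hy1 : y.1 = 0
        · left
          exact ⟨by simp [hx1, hy1, hP0], trivial⟩
        · -- x.1 = 0, y.1 ≠ 0 : show sq y.1 ⊆ P₁, then y.1 ∈ P₁
          have hsqy : Hyper.sq M₁.hmul y.1 ⊆ P₁ := by
            intro b hb
            obtain ⟨a, ha⟩ := M₁.hmul_nonempty (0:H₁) 0
            have hab : a - b ∈ P₁ := h1 ⟨a, by simpa [hx1, Hyper.sq] using ha, b, hb, rfl⟩
            exact mem_of_sub_left hPid (sq0 (by simpa [hx1, Hyper.sq] using ha)) hab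
          have hyP : y.1 ∈ P₁ := key y.1 hy1 hsqy hsdf
          left
          exact ⟨by simpa [hx1] using (hPid.2.1 0 hP0 y.1 hyP), trivial⟩
      · by_cases hy1 : y.1 = 0
        · -- y.1 = 0, x.1 ≠ 0
          have hsqx : Hyper.sq M₁.hmul x.1 ⊆ P₁ := by
            intro b hb
            obtain ⟨a, ha⟩ := M₁.hmul_nonempty (0:H₁) 0
            have hab : b - a ∈ P₁ := h1 ⟨b, hb, a, by simpa [hy1, Hyper.sq] using ha, rfl⟩
            have haP : a ∈ P₁ := sq0 (by simpa [hy1, Hyper.sq] using ha)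
            simpa using ideal_add hPid hab haP
          have hxP : x.1 ∈ P₁ := key x.1 hx1 hsqx hsdf
          left
          exact ⟨by simpa [hy1] using hxP, trivial⟩
        · rcases hsdf.2.2 x.1 y.1 hx1 hy1 h1 with h | h
          · exact Or.inl ⟨h, trivial⟩
          · exact Or.inr ⟨h, trivial⟩
  · rintro ⟨-, -, hsdf⟩
    refine ⟨hPid, h₁p, ?_⟩
    intro x y hx hy hsub
    have hsub' : Hyper.sq (prodMul M₁.hmul M₂.hmul) ((x, 0) : H₁ × H₂) -
        Hyper.sq (prodMul M₁.hmul M₂.hmul) ((y, 0) : H₁ × H₂) ⊆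
        P₁ ×ˢ (Set.univ : Set H₂) := by
      rintro c ⟨a, ⟨ha1, -⟩, b, ⟨hb1, -⟩, rfl⟩
      exact ⟨hsub ⟨a.1, ha1, b.1, hb1, rfl⟩, trivial⟩
    have hx' : ((x, 0) : H₁ × H₂) ≠ 0 := by simp [Prod.ext_iff, hx]
    have hy' : ((y, 0) : H₁ × H₂) ≠ 0 := by simp [Prod.ext_iff, hy]
    rcases hsdf _ _ hx' hy' hsub' with h | h
    · exact Or.inl h.1
    · exact Or.inr h.1
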